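/- Let R ∈ ℝ. The restriction of the 3-form Dx to the level hypersurface {X ∈ H_ℝ : N(X) = R} equals (X/‖X‖)·dS, and the restriction of Dx to the sphere {X ∈ H_ℝ : ‖X‖ = R} equals (X⁻/‖X‖)·dS = (X⁻/R)·dS, where both hypersurfaces are oriented as boundaries of {N(X) < R} and {‖X‖ < R} respectively and dS denotes the restriction of the Euclidean surface measure of H_ℝ. -/

import Mathlib

/- STATEMENT 15: Restriction formulas for the 3-form Dx on H_ℝ (identified
with ℝ⁴ via X = x⁰e₀ + x¹ẽ₁ + x²ẽ₂ + x³e₃):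
on the level hypersurface {N(X) = R}, Dx = (X/‖X‖)·dS, and on the sphere
{‖X‖ = R}, Dx = (X⁻/‖X‖)·dS = (X⁻/R)·dS, both hypersurfaces being oriented as
boundaries of {N(X) < R} resp. {‖X‖ < R} and dS being the Euclidean surface
measure.  Pointwise formulation: for tangent vectors τ₁,τ₂,τ₃ at a point of the
hypersurface, Dx(τ₁,τ₂,τ₃) = dV(n,τ₁,τ₂,τ₃)·(value), where n is the outward
Euclidean unit normal, so that dS(τ₁,τ₂,τ₃) = dV(n,τ₁,τ₂,τ₃). -/

noncomputable section
open Matrix Complex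

abbrev HC : Type := Matrix (Fin 2) (Fin 2) ℂ

def e0 : HC := 1
def e3 : HC := !![-I, 0; 0, I]
def et1 : HC := !![0, 1; 1, 0]
def et2 : HC := !![0, I; -I, 0]

def φR (x : Fin 4 → ℝ) : HC := x 0 • e0 + x 1 • et1 + x 2 • et2 + x 3 • e3

def invol (Z : HC) : HC := - (e3 * Z * e3)

/-- N(X) = (x⁰)² − (x¹)² − (x²)² + (x³)². -/
def Ns (x : Fin 4 → ℝ) : ℝ := x 0 ^ 2 - x 1 ^ 2 - x 2 ^ 2 + x 3 ^ 2

/-- The Euclidean norm ‖X‖ = √((x⁰)² + (x¹)² + (x²)² + (x³)²). -/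
def enorm4 (x : Fin 4 → ℝ) : ℝ := Real.sqrt (x 0 ^ 2 + x 1 ^ 2 + x 2 ^ 2 + x 3 ^ 2)

/-- The Euclidean inner product on ℝ⁴. -/
def dot (x y : Fin 4 → ℝ) : ℝ := ∑ i : Fin 4, x i * y i

/-- The signature involution (x⁰,x¹,x²,x³) ↦ (x⁰,−x¹,−x²,x³); ∇N(X) = 2·J X,
so J X is an outward normal direction for {N < R} and ‖J X‖ = ‖X‖. -/
def Jr (x : Fin 4 → ℝ) : Fin 4 → ℝ := fun i => ![1, -1, -1, 1] i * x i

def rdet3 (u : Fin 3 → (Fin 4 → ℝ)) (p q r : Fin 4) : ℝ :=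
  Matrix.det !![u 0 p, u 1 p, u 2 p; u 0 q, u 1 q, u 2 q; u 0 r, u 1 r, u 2 r]

/-- Dx = e₀ dx¹∧dx²∧dx³ + ẽ₁ dx⁰∧dx²∧dx³ − ẽ₂ dx⁰∧dx¹∧dx³ − e₃ dx⁰∧dx¹∧dx². -/
def Dx (u : Fin 3 → (Fin 4 → ℝ)) : HC :=
  rdet3 u 1 2 3 • e0 + rdet3 u 0 2 3 • et1 - rdet3 u 0 1 3 • et2 - rdet3 u 0 1 2 • e3

/-- dV(v₀,v₁,v₂,v₃): the volume form with dV(e₀,ẽ₁,ẽ₂,e₃) = 1. -/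
def dV4 (v : Fin 4 → (Fin 4 → ℝ)) : ℝ := Matrix.det (Matrix.of fun p j => v j p)

/-! auxiliary lemmas -/

lemma dV4_expand (u : Fin 4 → ℝ) (τ : Fin 3 → (Fin 4 → ℝ)) :
    dV4 (Fin.cons u τ) =
      u 0 * rdet3 τ 1 2 3 - u 1 * rdet3 τ 0 2 3 + u 2 * rdet3 τ 0 1 3 - u 3 * rdet3 τ 0 1 2 := by
  have hc : (Fin.cons u τ : Fin 4 → Fin 4 → ℝ) = ![u, τ 0, τ 1, τ 2] := by
    funext j; fin_cases j <;> rfl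
  rw [dV4, hc]
  rw [Matrix.det_succ_column_zero]
  simp [rdet3, Fin.sum_univ_succ, Matrix.det_fin_three, Fin.succAbove]
  ring

lemma dV4_zero_of_orth (v : Fin 4 → ℝ) (hv : v ≠ 0) (τ : Fin 3 → (Fin 4 → ℝ))
    (hτ : ∀ k, dot v (τ k) = 0) (u : Fin 4 → ℝ) (hu : dot v u = 0) :
    dV4 (Fin.cons u τ) = 0 := by
  rw [dV4, ← Matrix.exists_vecMul_eq_zero_iff]
  refine ⟨v, hv, ?_⟩
  funext j
  refine Fin.cases ?_ (fun k => ?_) j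
  · simpa [Matrix.vecMul, dotProduct, dot] using hu
  · simpa [Matrix.vecMul, dotProduct, dot] using hτ k

lemma dot_single (v : Fin 4 → ℝ) (p : Fin 4) : dot v (Pi.single p 1) = v p := by
  fin_cases p <;> simp [dot, Fin.sum_univ_four, Pi.single_apply]

lemma key (v : Fin 4 → ℝ) (hv : v ≠ 0) (τ : Fin 3 → (Fin 4 → ℝ))
    (hτ : ∀ k, dot v (τ k) = 0) (p : Fin 4) :
    dot v v * dV4 (Fin.cons (Pi.single p 1) τ) = dV4 (Fin.cons v τ) * v p := by
  set u : Fin 4 → ℝ := (dot v v) • (Pi.single p 1 : Fin 4 → ℝ) - (v p) • v with hudef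
  have hq : ∀ q, u q = dot v v * (Pi.single p 1 : Fin 4 → ℝ) q - v p * v q := by
    intro q; simp [hudef]
  have hu : dot v u = 0 := by
    simp only [dot, hq]
    fin_cases p <;>
      simp [Fin.sum_univ_four, Pi.single_apply, dot] <;> ring
  have h0 := dV4_zero_of_orth v hv τ hτ u hu
  rw [dV4_expand] at h0
  rw [dV4_expand, dV4_expand]
  rw [hq 0, hq 1, hq 2, hq 3] at h0
  linear_combination h0

lemma w_vals (τ : Fin 3 → (Fin 4 → ℝ)) :
    dV4 (Fin.cons (Pi.single (0:Fin 4) 1) τ) = rdet3 τ 1 2 3 ∧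
    dV4 (Fin.cons (Pi.single (1:Fin 4) 1) τ) = -rdet3 τ 0 2 3 ∧
    dV4 (Fin.cons (Pi.single (2:Fin 4) 1) τ) = rdet3 τ 0 1 3 ∧
    dV4 (Fin.cons (Pi.single (3:Fin 4) 1) τ) = -rdet3 τ 0 1 2 := by
  refine ⟨?_, ?_, ?_, ?_⟩ <;> rw [dV4_expand] <;> simp [Pi.single_apply]

lemma key4 (v : Fin 4 → ℝ) (hv : v ≠ 0) (τ : Fin 3 → (Fin 4 → ℝ))
    (hτ : ∀ k, dot v (τ k) = 0) :
    dot v v * rdet3 τ 1 2 3 = dV4 (Fin.cons v τ) * v 0 ∧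
    dot v v * rdet3 τ 0 2 3 = -(dV4 (Fin.cons v τ) * v 1) ∧
    dot v v * rdet3 τ 0 1 3 = dV4 (Fin.cons v τ) * v 2 ∧
    dot v v * rdet3 τ 0 1 2 = -(dV4 (Fin.cons v τ) * v 3) := by
  obtain ⟨w0, w1, w2, w3⟩ := w_vals τ
  have k0 := key v hv τ hτ 0
  have k1 := key v hv τ hτ 1
  have k2 := key v hv τ hτ 2
  have k3 := key v hv τ hτ 3
  rw [w0] at k0; rw [w1] at k1; rw [w2] at k2; rw [w3] at k3
  refine ⟨k0, ?_, k2, ?_⟩ <;> linarith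

lemma combine (a b c d α y0 y1 y2 y3 : ℝ) (h0 : a = α * y0) (h1 : b = α * y1)
    (h2 : c = -(α * y2)) (h3 : d = -(α * y3)) :
    a • e0 + b • et1 - c • et2 - d • e3 = α • (y0 • e0 + y1 • et1 + y2 • et2 + y3 • e3) := by
  subst h0 h1 h2 h3
  module

lemma φR_eq (x : Fin 4 → ℝ) :
    φR x = !![(x 0 : ℂ) - x 3 * I, x 1 + x 2 * I; x 1 - x 2 * I, x 0 + x 3 * I] := by
  rw [φR, e0, e3, et1, et2]
  ext i j
  fin_cases i <;> fin_cases j <;> simp [Matrix.one_apply] <;> ring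

lemma invol_φR (x : Fin 4 → ℝ) : invol (φR x) = φR (Jr x) := by
  have h0 : Jr x 0 = x 0 := by simp [Jr]
  have h1 : Jr x 1 = -x 1 := by simp [Jr]
  have h2 : Jr x 2 = -x 2 := by simp [Jr]
  have h3 : Jr x 3 = x 3 := by simp [Jr]
  rw [invol, φR_eq, φR_eq, h0, h1, h2, h3, e3]
  ext i j
  fin_cases i <;> fin_cases j <;>
    simp [Matrix.mul_apply, Fin.sum_univ_two] <;>
    ring_nf <;>
    simp [Complex.I_sq, show (I : ℂ) ^ 3 = -I from by rw [pow_succ, Complex.I_sq]; ring] <;>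
    ring_nf

lemma dot_pos (v : Fin 4 → ℝ) (hv : v ≠ 0) : 0 < dot v v := by
  by_contra h
  push_neg at h
  have h4 : v 0 * v 0 + v 1 * v 1 + v 2 * v 2 + v 3 * v 3 ≤ 0 := by
    simpa [dot, Fin.sum_univ_four] using h
  have n0 := mul_self_nonneg (v 0)
  have n1 := mul_self_nonneg (v 1)
  have n2 := mul_self_nonneg (v 2)
  have n3 := mul_self_nonneg (v 3)
  have h0 : v 0 = 0 := mul_self_eq_zero.mp (le_antisymm (by linarith) n0)
  have h1 : v 1 = 0 := mul_self_eq_zero.mp (le_antisymm (by linarith) n1)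
  have h2 : v 2 = 0 := mul_self_eq_zero.mp (le_antisymm (by linarith) n2)
  have h3 : v 3 = 0 := mul_self_eq_zero.mp (le_antisymm (by linarith) n3)
  apply hv
  funext i
  fin_cases i
  · exact h0
  · exact h1
  · exact h2
  · exact h3

lemma enorm_sq (x : Fin 4 → ℝ) : enorm4 x ^ 2 = dot x x := by
  rw [enorm4, Real.sq_sqrt (by positivity), dot, Fin.sum_univ_four]; ring

lemma Jr_ne (x : Fin 4 → ℝ) (hx : x ≠ 0) : Jr x ≠ 0 := by
  intro h
  apply hx
  funext i
  have hi := congrFun h i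
  fin_cases i <;> simp [Jr] at hi <;> simpa using hi

lemma dot_Jr (x : Fin 4 → ℝ) : dot (Jr x) (Jr x) = dot x x := by
  simp [dot, Jr, Fin.sum_univ_four] <;> ring

lemma dV4_smul (c : ℝ) (v : Fin 4 → ℝ) (τ : Fin 3 → (Fin 4 → ℝ)) :
    dV4 (Fin.cons (c • v) τ) = c * dV4 (Fin.cons v τ) := by
  rw [dV4_expand, dV4_expand]; simp [mul_sub, mul_add] <;> ring

theorem Dx_restrictions (R : ℝ) :
    -- on the hypersurface {N(X) = R}: Dx = (X/‖X‖)·dS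
    (∀ x : Fin 4 → ℝ, Ns x = R → x ≠ 0 →
      ∀ τ : Fin 3 → (Fin 4 → ℝ), (∀ k, dot (Jr x) (τ k) = 0) →
        Dx τ = dV4 (Fin.cons ((enorm4 x)⁻¹ • Jr x) τ) • ((enorm4 x)⁻¹ • φR x)) ∧
    -- on the sphere {‖X‖ = R}: Dx = (X⁻/‖X‖)·dS = (X⁻/R)·dS
    (0 < R → ∀ x : Fin 4 → ℝ, enorm4 x = R →
      ∀ τ : Fin 3 → (Fin 4 → ℝ), (∀ k, dot x (τ k) = 0) →
        Dx τ = dV4 (Fin.cons (R⁻¹ • x) τ) • ((enorm4 x)⁻¹ • invol (φR x)) ∧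
        Dx τ = dV4 (Fin.cons (R⁻¹ • x) τ) • (R⁻¹ • invol (φR x))) := by
  constructor
  · intro x _ hx τ hτ
    have hJ : Jr x ≠ 0 := Jr_ne x hx
    have hS : 0 < dot x x := dot_pos x hx
    have hSne : dot x x ≠ 0 := ne_of_gt hS
    have he2 : enorm4 x ^ 2 = dot x x := enorm_sq x
    have hene : enorm4 x ≠ 0 := by
      intro h; rw [h] at he2; simp at he2; exact hSne he2.symm
    obtain ⟨k0, k1, k2, k3⟩ := key4 (Jr x) hJ τ hτ
    rw [dot_Jr] at k0 k1 k2 k3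
    set D := dV4 (Fin.cons (Jr x) τ) with hD
    have j0 : Jr x 0 = x 0 := by simp [Jr]
    have j1 : Jr x 1 = -x 1 := by simp [Jr]
    have j2 : Jr x 2 = -x 2 := by simp [Jr]
    have j3 : Jr x 3 = x 3 := by simp [Jr]
    rw [j0] at k0; rw [j1] at k1; rw [j2] at k2; rw [j3] at k3
    rw [dV4_smul, ← hD, smul_smul]
    set α := (enorm4 x)⁻¹ * D * (enorm4 x)⁻¹ with hα
    have hαe : α * dot x x = D := by
      rw [hα, ← he2, pow_two,
        show (enorm4 x)⁻¹ * D * (enorm4 x)⁻¹ * (enorm4 x * enorm4 x)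
          = D * ((enorm4 x)⁻¹ * enorm4 x) * ((enorm4 x)⁻¹ * enorm4 x) from by ring,
        inv_mul_cancel₀ hene]
      ring
    show rdet3 τ 1 2 3 • e0 + rdet3 τ 0 2 3 • et1 - rdet3 τ 0 1 3 • et2 - rdet3 τ 0 1 2 • e3
        = α • (x 0 • e0 + x 1 • et1 + x 2 • et2 + x 3 • e3)
    apply combine
    · apply mul_left_cancel₀ hSne; linear_combination k0 - x 0 * hαe
    · apply mul_left_cancel₀ hSne; linear_combination k1 - x 1 * hαe
    · apply mul_left_cancel₀ hSne; linear_combination k2 + x 2 * hαe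
    · apply mul_left_cancel₀ hSne; linear_combination k3 + x 3 * hαe
  · intro hR x hxR τ hτ
    have hRne : R ≠ 0 := ne_of_gt hR
    have hx : x ≠ 0 := by
      intro h
      rw [h] at hxR
      simp [enorm4] at hxR
      exact hRne hxR.symm
    have hS : 0 < dot x x := dot_pos x hx
    have hSne : dot x x ≠ 0 := ne_of_gt hS
    have hR2 : R ^ 2 = dot x x := by rw [← hxR]; exact enorm_sq x
    obtain ⟨k0, k1, k2, k3⟩ := key4 x hx τ hτ
    set D := dV4 (Fin.cons x τ) with hD
    have key_eq : Dx τ = dV4 (Fin.cons (R⁻¹ • x) τ) • (R⁻¹ • invol (φR x)) := by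
      rw [invol_φR, dV4_smul, ← hD, smul_smul]
      set α := R⁻¹ * D * R⁻¹ with hα
      have hαe : α * dot x x = D := by
        rw [hα, ← hR2, pow_two,
          show R⁻¹ * D * R⁻¹ * (R * R) = D * (R⁻¹ * R) * (R⁻¹ * R) from by ring,
          inv_mul_cancel₀ hRne]
        ring
      have j0 : Jr x 0 = x 0 := by simp [Jr]
      have j1 : Jr x 1 = -x 1 := by simp [Jr]
      have j2 : Jr x 2 = -x 2 := by simp [Jr]
      have j3 : Jr x 3 = x 3 := by simp [Jr]
      show rdet3 τ 1 2 3 • e0 + rdet3 τ 0 2 3 • et1 - rdet3 τ 0 1 3 • et2 - rdet3 τ 0 1 2 • e3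
          = α • (Jr x 0 • e0 + Jr x 1 • et1 + Jr x 2 • et2 + Jr x 3 • e3)
      rw [j0, j1, j2, j3]
      apply combine
      · apply mul_left_cancel₀ hSne; linear_combination k0 - x 0 * hαe
      · apply mul_left_cancel₀ hSne; linear_combination k1 + x 1 * hαe
      · apply mul_left_cancel₀ hSne; linear_combination k2 - x 2 * hαe
      · apply mul_left_cancel₀ hSne; linear_combination k3 + x 3 * hαe
    refine ⟨?_, key_eq⟩
    rw [hxR]
    exact key_eq
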